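/- Let $q$ not be a root of unity. Let $A = \begin{pmatrix} a_{11} & a_{12} \\ a_{21} & a_{22} \end{pmatrix} \in SL_2(\mathbb{Z})$, $\underline{c} \in (\mathbb{C}^*)^2$, and let $\tau = \tau_{\underline{c}} \tau_A$ be the corresponding automorphism of $\mathcal{L}_q(2)$. Twist the basic $\mathcal{L}_q(2)$-module $V = \mathbb{C}[t, t^{-1}]$ (where $x f(t) = f(qt)$, $y f(t) = t f(t)$) by $\tau$. Then the restriction of $V^\tau$ to the subalgebra $\mathcal{A}_q(2)$ is a simple $\mathcal{A}_q(2)$-module if and only if $a_{21} a_{22} < 0$. -/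

import Mathlib

/-- The action of `x` on the twisted basic module `V^τ = ℂ[t,t⁻¹]`
(basis `t^m`, `m : ℤ`): `x ⋆ t^m = c₁^{a₁₁} c₂^{a₂₁} q^{a₁₁(m + a₂₁)} t^{m + a₂₁}`. -/
noncomputable def XtwistOp (q c₁ c₂ : ℂ) (a₁₁ a₂₁ : ℤ) :
    (ℤ →₀ ℂ) →ₗ[ℂ] (ℤ →₀ ℂ) :=
  Finsupp.lsum ℂ fun m =>
    (c₁ ^ a₁₁ * c₂ ^ a₂₁ * q ^ (a₁₁ * (m + a₂₁))) • Finsupp.lsingle (m + a₂₁)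

/-- The action of `y` on the twisted basic module:
`y ⋆ t^m = c₁^{a₁₂} c₂^{a₂₂} q^{a₁₂(m + a₂₂)} t^{m + a₂₂}`. -/
noncomputable def YtwistOp (q c₁ c₂ : ℂ) (a₁₂ a₂₂ : ℤ) :
    (ℤ →₀ ℂ) →ₗ[ℂ] (ℤ →₀ ℂ) :=
  Finsupp.lsum ℂ fun m =>
    (c₁ ^ a₁₂ * c₂ ^ a₂₂ * q ^ (a₁₂ * (m + a₂₂))) • Finsupp.lsingle (m + a₂₂)


noncomputable def genOp (q α : ℂ) (b a : ℤ) : (ℤ →₀ ℂ) →ₗ[ℂ] (ℤ →₀ ℂ) :=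
  Finsupp.lsum ℂ fun m => (α * q ^ (b * (m + a))) • Finsupp.lsingle (m + a)

lemma genOp_single (q α : ℂ) (b a m : ℤ) (r : ℂ) :
    genOp q α b a (Finsupp.single m r)
      = (α * q ^ (b * (m + a)) * r) • Finsupp.single (m + a) 1 := by
  rw [genOp, Finsupp.lsum_single]
  simp only [LinearMap.smul_apply, Finsupp.lsingle_apply, Finsupp.smul_single,
    smul_eq_mul, mul_one]

lemma genOp_apply (q α : ℂ) (b a : ℤ) (f : ℤ →₀ ℂ) (k : ℤ) :
    genOp q α b a f k = α * q ^ (b * k) * f (k - a) := by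
  induction f using Finsupp.induction_linear with
  | zero => simp only [map_zero, Finsupp.coe_zero, Pi.zero_apply, mul_zero]
  | add f h hf hh =>
      simp only [map_add, Finsupp.add_apply, hf, hh]; ring
  | single m r =>
      rw [genOp_single]
      rcases eq_or_ne k (m + a) with h | h
      · subst h
        simp only [Finsupp.smul_apply, Finsupp.single_apply, if_pos rfl, smul_eq_mul, mul_one,
          add_sub_cancel_right, if_true]
      · have h' : k - a ≠ m := by omega
        simp only [Finsupp.smul_apply, Finsupp.single_apply, smul_eq_mul]
        rw [if_neg (by omega : ¬ m + a = k), if_neg (fun hh => h' hh.symm)]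
        simp

def Tsum : ℕ → ℤ
  | 0 => 0
  | n + 1 => Tsum n + (n + 1)

lemma genOp_pow_single (q : ℂ) (hq : q ≠ 0) (α : ℂ) (b a : ℤ) (n : ℕ) (m : ℤ) :
    ((genOp q α b a : Module.End ℂ (ℤ →₀ ℂ)) ^ n) (Finsupp.single m 1)
      = (α ^ n * q ^ (b * (n * m) + b * a * Tsum n)) • Finsupp.single (m + n * a) 1 := by
  induction n generalizing m with
  | zero => simp [Tsum]
  | succ n ih =>
      rw [pow_succ, Module.End.mul_apply, genOp_single, mul_one, map_smul, ih, smul_smul]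
      congr 1
      · rw [show b * (↑(n + 1) * m) + b * a * Tsum (n + 1)
            = b * (m + a) + (b * (↑n * (m + a)) + b * a * Tsum n) by push_cast [Tsum]; ring,
          zpow_add₀ hq, mul_mul_mul_comm, pow_succ, mul_comm α (α ^ n)]
        rw [zpow_add₀ hq, zpow_add₀ hq]
      · congr 1
        push_cast
        ring


lemma zpow_eq_one_arg (q : ℂ) (hq : q ≠ 0) (hroot : ∀ k : ℕ, q ^ (k + 1) ≠ 1)
    (k : ℤ) (h : q ^ k = 1) : k = 0 := by
  rcases lt_trichotomy k 0 with hk | hk | hk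
  · exfalso
    have h' : q ^ (-k) = 1 := by rw [zpow_neg, h, inv_one]
    obtain ⟨n, hn⟩ : ∃ n : ℕ, -k = (n : ℤ) + 1 := ⟨(-k - 1).toNat, by omega⟩
    rw [hn, show ((n : ℤ) + 1) = ((n + 1 : ℕ) : ℤ) by push_cast; ring, zpow_natCast] at h'
    exact hroot n h'
  · exact hk
  · exfalso
    obtain ⟨n, hn⟩ : ∃ n : ℕ, k = (n : ℤ) + 1 := ⟨(k - 1).toNat, by omega⟩
    rw [hn, show ((n : ℤ) + 1) = ((n + 1 : ℕ) : ℤ) by push_cast; ring, zpow_natCast] at h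
    exact hroot n h

lemma diag_apply (L : (ℤ →₀ ℂ) →ₗ[ℂ] (ℤ →₀ ℂ)) (ev : ℤ → ℂ)
    (hL : ∀ m, L (Finsupp.single m 1) = ev m • Finsupp.single m 1)
    (f : ℤ →₀ ℂ) (k : ℤ) : L f k = ev k * f k := by
  induction f using Finsupp.induction_linear with
  | zero => simp only [map_zero, Finsupp.coe_zero, Pi.zero_apply, mul_zero]
  | add f h hf hh => simp only [map_add, Finsupp.add_apply, hf, hh]; ring
  | single m r =>
      have : Finsupp.single m r = r • Finsupp.single m (1 : ℂ) := by
        rw [Finsupp.smul_single, smul_eq_mul, mul_one]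
      rw [this, map_smul, hL]
      rcases eq_or_ne k m with h | h
      · subst h
        simp only [Finsupp.smul_apply, Finsupp.single_apply, if_pos rfl, smul_eq_mul, mul_one]
        ring
      · simp only [Finsupp.smul_apply, Finsupp.single_apply, smul_eq_mul]
        rw [if_neg (fun hh => h hh.symm)]
        simp

lemma components_mem (W : Submodule ℂ (ℤ →₀ ℂ)) (L : (ℤ →₀ ℂ) →ₗ[ℂ] (ℤ →₀ ℂ))
    (ev : ℤ → ℂ) (hL : ∀ m, L (Finsupp.single m 1) = ev m • Finsupp.single m 1)
    (hinv : ∀ f ∈ W, L f ∈ W) (hev : Function.Injective ev) :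
    ∀ f ∈ W, ∀ m, f m ≠ 0 → Finsupp.single m (1 : ℂ) ∈ W := by
  suffices H : ∀ n : ℕ, ∀ f ∈ W, f.support.card ≤ n → ∀ m, f m ≠ 0 →
      Finsupp.single m (1 : ℂ) ∈ W by
    intro f hf m hm
    exact H f.support.card f hf le_rfl m hm
  intro n
  induction n with
  | zero =>
      intro f _ hcard m hm
      exact absurd (Finset.card_pos.2 ⟨m, Finsupp.mem_support_iff.2 hm⟩) (by omega)
  | succ n ih =>
      intro f hf hcard m hm
      by_cases hsub : ∀ m', f m' ≠ 0 → m' = m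
      · have hfs : f = Finsupp.single m (f m) := by
          ext k
          rcases eq_or_ne k m with h | h
          · subst h; rw [Finsupp.single_apply, if_pos rfl]
          · rw [Finsupp.single_apply, if_neg (fun hh => h hh.symm)]
            by_contra hk
            exact h (hsub k hk)
        have : (f m)⁻¹ • Finsupp.single m (f m) ∈ W := by
          rw [← hfs]; exact Submodule.smul_mem W _ hf
        rwa [Finsupp.smul_single, smul_eq_mul, inv_mul_cancel₀ hm] at this
      · push_neg at hsub
        obtain ⟨m', hm', hne⟩ := hsub
        set g : ℤ →₀ ℂ := L f - ev m' • f with hg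
        have hgW : g ∈ W := sub_mem (hinv f hf) (Submodule.smul_mem W _ hf)
        have hgapp : ∀ k, g k = (ev k - ev m') * f k := by
          intro k
          rw [hg, Finsupp.sub_apply, Finsupp.smul_apply, diag_apply L ev hL, smul_eq_mul]
          ring
        have hgm : g m ≠ 0 := by
          rw [hgapp]
          exact mul_ne_zero (sub_ne_zero.2 fun h => hne (hev h).symm) hm
        have hsupp : g.support ⊆ f.support.erase m' := by
          intro k hk
          rw [Finsupp.mem_support_iff] at hk
          rw [Finset.mem_erase, Finsupp.mem_support_iff]
          constructor
          · intro h; subst h; exact hk (by rw [hgapp]; ring)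
          · intro h; exact hk (by rw [hgapp, h, mul_zero])
        have hcard' : g.support.card ≤ n := by
          have h1 := Finset.card_le_card hsupp
          have h2 := Finset.card_erase_of_mem (Finsupp.mem_support_iff.2 hm')
          omega
        exact ih g hgW hcard' m hgm


lemma reach_aux (a b : ℤ) (ha : 0 < a) (hb : b < 0) (hg : Int.gcd a b = 1) (d : ℤ) :
    ∃ u v : ℕ, (u : ℤ) * a + (v : ℤ) * b = d := by
  have hbez : (Int.gcd a b : ℤ) = a * Int.gcdA a b + b * Int.gcdB a b := Int.gcd_eq_gcd_ab a b
  rw [hg] at hbez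
  set s : ℤ := d * Int.gcdA a b with hs
  set t : ℤ := d * Int.gcdB a b with ht
  have hst : s * a + t * b = d := by
    rw [hs, ht]
    have : d * (a * Int.gcdA a b + b * Int.gcdB a b) = d * 1 := by rw [← hbez]; norm_num
    nlinarith [this]
  set k : ℤ := |s| + |t| with hk
  have hk0 : 0 ≤ k := by positivity
  have hu : 0 ≤ s + k * (-b) := by nlinarith [abs_nonneg s, abs_nonneg t, neg_abs_le s]
  have hv : 0 ≤ t + k * a := by nlinarith [abs_nonneg s, abs_nonneg t, neg_abs_le t]
  refine ⟨(s + k * (-b)).toNat, (t + k * a).toNat, ?_⟩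
  rw [Int.toNat_of_nonneg hu, Int.toNat_of_nonneg hv]
  nlinarith [hst]

lemma reach (a b : ℤ) (hab : a * b < 0) (hg : Int.gcd a b = 1) (d : ℤ) :
    ∃ u v : ℕ, (u : ℤ) * a + (v : ℤ) * b = d := by
  rcases lt_trichotomy a 0 with ha | ha | ha
  · have hb : 0 < b := by nlinarith
    obtain ⟨u, v, huv⟩ := reach_aux b a hb ha (by rwa [Int.gcd_comm]) d
    exact ⟨v, u, by linarith⟩
  · simp [ha] at hab
  · have hb : b < 0 := by nlinarith
    exact reach_aux a b ha hb hg d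

lemma simple_of_neg (q : ℂ) (hq : q ≠ 0) (hroot : ∀ k : ℕ, q ^ (k + 1) ≠ 1)
    (α β : ℂ) (hα : α ≠ 0) (hβ : β ≠ 0)
    (a₁₁ a₁₂ a₂₁ a₂₂ : ℤ) (hdet : a₁₁ * a₂₂ - a₁₂ * a₂₁ = 1)
    (hlt : a₂₁ * a₂₂ < 0) (W : Submodule ℂ (ℤ →₀ ℂ))
    (hX : ∀ f ∈ W, genOp q α a₁₁ a₂₁ f ∈ W)
    (hY : ∀ f ∈ W, genOp q β a₁₂ a₂₂ f ∈ W)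
    (hne : W ≠ ⊥) : W = ⊤ := by
  have hgcd : Int.gcd a₂₁ a₂₂ = 1 := by
    have h1 : (Int.gcd a₂₁ a₂₂ : ℤ) ∣ 1 := by
      rw [← hdet]
      exact dvd_sub (Dvd.dvd.mul_left (Int.gcd_dvd_right a₂₁ a₂₂) a₁₁)
        (Dvd.dvd.mul_left (Int.gcd_dvd_left a₂₁ a₂₂) a₁₂)
    exact Nat.dvd_one.mp (by exact_mod_cast h1)
  obtain ⟨f, hfW, hf0⟩ := (Submodule.ne_bot_iff W).1 hne
  obtain ⟨m₀, hm₀⟩ : ∃ m, f m ≠ 0 := by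
    by_contra h
    push_neg at h
    exact hf0 (Finsupp.ext fun m => h m)
  set n₁ := a₂₂.natAbs with hn1
  set n₂ := a₂₁.natAbs with hn2
  have hsgn : (0 < a₂₁ ∧ a₂₂ < 0) ∨ (a₂₁ < 0 ∧ 0 < a₂₂) := by
    rcases lt_trichotomy a₂₁ 0 with h | h | h
    · right; exact ⟨h, by nlinarith⟩
    · exfalso; rw [h] at hlt; simp at hlt
    · left; exact ⟨h, by nlinarith⟩
  have hshift : (n₁ : ℤ) * a₂₁ + (n₂ : ℤ) * a₂₂ = 0 := by
    rcases hsgn with ⟨h1, h2⟩ | ⟨h1, h2⟩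
    · have e1 : (n₁ : ℤ) = -a₂₂ := by omega
      have e2 : (n₂ : ℤ) = a₂₁ := by omega
      rw [e1, e2]; ring
    · have e1 : (n₁ : ℤ) = a₂₂ := by omega
      have e2 : (n₂ : ℤ) = -a₂₁ := by omega
      rw [e1, e2]; ring
  have hslope : a₁₁ * (n₁ : ℤ) + a₁₂ * (n₂ : ℤ) ≠ 0 := by
    rcases hsgn with ⟨h1, h2⟩ | ⟨h1, h2⟩
    · have e1 : (n₁ : ℤ) = -a₂₂ := by omega
      have e2 : (n₂ : ℤ) = a₂₁ := by omega
      rw [e1, e2]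
      intro h
      exact absurd (by linear_combination h + hdet : (0 : ℤ) = 1) (by norm_num)
    · have e1 : (n₁ : ℤ) = a₂₂ := by omega
      have e2 : (n₂ : ℤ) = -a₂₁ := by omega
      rw [e1, e2]
      intro h
      exact absurd (by linear_combination h - hdet : (1 : ℤ) = 0) (by norm_num)
  -- the diagonal operator
  set L : Module.End ℂ (ℤ →₀ ℂ) :=
    (genOp q α a₁₁ a₂₁ : Module.End ℂ (ℤ →₀ ℂ)) ^ n₁ *
      (genOp q β a₁₂ a₂₂ : Module.End ℂ (ℤ →₀ ℂ)) ^ n₂ with hL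
  set ev : ℤ → ℂ := fun m =>
    (α ^ n₁ * q ^ (a₁₁ * ((n₁ : ℤ) * (m + (n₂ : ℤ) * a₂₂)) + a₁₁ * a₂₁ * Tsum n₁)) *
      (β ^ n₂ * q ^ (a₁₂ * ((n₂ : ℤ) * m) + a₁₂ * a₂₂ * Tsum n₂)) with hev_def
  have hLsingle : ∀ m, L (Finsupp.single m 1) = ev m • Finsupp.single m 1 := by
    intro m
    rw [hL, Module.End.mul_apply, genOp_pow_single q hq, map_smul, genOp_pow_single q hq,
      smul_smul, show m + (n₂ : ℤ) * a₂₂ + (n₁ : ℤ) * a₂₁ = m by linarith [hshift]]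
    rw [hev_def]
    ring_nf
  have hev : Function.Injective ev := by
    intro m m' h
    rw [hev_def] at h
    simp only at h
    have hcomb : ∀ x : ℤ,
        (α ^ n₁ * q ^ (a₁₁ * ((n₁ : ℤ) * (x + (n₂ : ℤ) * a₂₂)) + a₁₁ * a₂₁ * Tsum n₁)) *
          (β ^ n₂ * q ^ (a₁₂ * ((n₂ : ℤ) * x) + a₁₂ * a₂₂ * Tsum n₂))
        = (α ^ n₁ * β ^ n₂) *
          q ^ ((a₁₁ * ((n₁ : ℤ) * (x + (n₂ : ℤ) * a₂₂)) + a₁₁ * a₂₁ * Tsum n₁) +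
            (a₁₂ * ((n₂ : ℤ) * x) + a₁₂ * a₂₂ * Tsum n₂)) := by
      intro x
      conv_lhs => rw [zpow_add₀ hq, zpow_add₀ hq]
      conv_rhs => rw [zpow_add₀ hq, zpow_add₀ hq, zpow_add₀ hq]
      ring
    rw [hcomb, hcomb] at h
    have hne : α ^ n₁ * β ^ n₂ ≠ 0 := mul_ne_zero (pow_ne_zero _ hα) (pow_ne_zero _ hβ)
    have h2 := mul_left_cancel₀ hne h
    have h3 : q ^ (((a₁₁ * ((n₁ : ℤ) * (m + (n₂ : ℤ) * a₂₂)) + a₁₁ * a₂₁ * Tsum n₁) +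
            (a₁₂ * ((n₂ : ℤ) * m) + a₁₂ * a₂₂ * Tsum n₂)) -
        ((a₁₁ * ((n₁ : ℤ) * (m' + (n₂ : ℤ) * a₂₂)) + a₁₁ * a₂₁ * Tsum n₁) +
            (a₁₂ * ((n₂ : ℤ) * m') + a₁₂ * a₂₂ * Tsum n₂))) = 1 := by
      rw [zpow_sub₀ hq, h2, div_self (zpow_ne_zero _ hq)]
    have h4 := zpow_eq_one_arg q hq hroot _ h3
    have h5 : (a₁₁ * (n₁ : ℤ) + a₁₂ * (n₂ : ℤ)) * (m - m') = 0 := by linear_combination h4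
    rcases mul_eq_zero.mp h5 with h6 | h6
    · exact absurd h6 hslope
    · omega
  have hLinv : ∀ g ∈ W, L g ∈ W := by
    have hpow : ∀ (T : Module.End ℂ (ℤ →₀ ℂ)), (∀ g ∈ W, T g ∈ W) →
        ∀ (n : ℕ), ∀ g ∈ W, (T ^ n) g ∈ W := by
      intro T hT n
      induction n with
      | zero => intro g hg; simpa using hg
      | succ n ih =>
          intro g hg
          rw [pow_succ, Module.End.mul_apply]
          exact ih _ (hT g hg)
    intro g hg
    rw [hL, Module.End.mul_apply]
    exact hpow _ hX n₁ _ (hpow _ hY n₂ g hg)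
  have hsingle₀ : Finsupp.single m₀ (1 : ℂ) ∈ W :=
    components_mem W L ev hLsingle hLinv hev f hfW m₀ hm₀
  -- stepping
  have hstep : ∀ (γ : ℂ), γ ≠ 0 → ∀ (b a : ℤ), (∀ g ∈ W, genOp q γ b a g ∈ W) →
      ∀ m : ℤ, Finsupp.single m (1 : ℂ) ∈ W → Finsupp.single (m + a) (1 : ℂ) ∈ W := by
    intro γ hγ b a hgen m hmem
    have h1 := hgen _ hmem
    rw [genOp_single, mul_one] at h1
    have hu : γ * q ^ (b * (m + a)) ≠ 0 := mul_ne_zero hγ (zpow_ne_zero _ hq)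
    have h2 := Submodule.smul_mem W (γ * q ^ (b * (m + a)))⁻¹ h1
    rwa [smul_smul, inv_mul_cancel₀ hu, one_smul] at h2
  have hiter : ∀ (γ : ℂ), γ ≠ 0 → ∀ (b a : ℤ), (∀ g ∈ W, genOp q γ b a g ∈ W) →
      ∀ (u : ℕ) (m : ℤ), Finsupp.single m (1 : ℂ) ∈ W →
        Finsupp.single (m + u * a) (1 : ℂ) ∈ W := by
    intro γ hγ b a hgen u
    induction u with
    | zero => intro m hm; simpa using hm
    | succ u ih =>
        intro m hm
        have := hstep γ hγ b a hgen _ (ih m hm)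
        rwa [show m + (u : ℤ) * a + a = m + ((u : ℕ) + 1 : ℕ) * a by push_cast; ring] at this
  have hall : ∀ n : ℤ, Finsupp.single n (1 : ℂ) ∈ W := by
    intro n
    obtain ⟨u, v, huv⟩ := reach a₂₁ a₂₂ hlt hgcd (n - m₀)
    have h1 := hiter α hα a₁₁ a₂₁ hX u m₀ hsingle₀
    have h2 := hiter β hβ a₁₂ a₂₂ hY v _ h1
    rwa [show m₀ + (u : ℤ) * a₂₁ + (v : ℤ) * a₂₂ = n by linarith] at h2
  rw [eq_top_iff]
  intro g _
  refine Finsupp.induction g (Submodule.zero_mem W) ?_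
  intro a b g' _ _ hg'
  refine Submodule.add_mem W ?_ hg'
  have := Submodule.smul_mem W b (hall a)
  rwa [Finsupp.smul_single, smul_eq_mul, mul_one] at this


lemma supported_invariant (q γ : ℂ) (b a : ℤ) (S : Set ℤ) (hS : ∀ k : ℤ, k ∉ S → k - a ∉ S) :
    ∀ f ∈ Finsupp.supported ℂ ℂ S, genOp q γ b a f ∈ Finsupp.supported ℂ ℂ S := by
  intro f hf
  rw [Finsupp.mem_supported'] at hf ⊢
  intro k hk
  rw [genOp_apply, hf _ (hS k hk), mul_zero]

lemma Xtwist_eq_gen (q c₁ c₂ : ℂ) (a₁₁ a₂₁ : ℤ) :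
    XtwistOp q c₁ c₂ a₁₁ a₂₁ = genOp q (c₁ ^ a₁₁ * c₂ ^ a₂₁) a₁₁ a₂₁ := rfl

lemma Ytwist_eq_gen (q c₁ c₂ : ℂ) (a₁₂ a₂₂ : ℤ) :
    YtwistOp q c₁ c₂ a₁₂ a₂₂ = genOp q (c₁ ^ a₁₂ * c₂ ^ a₂₂) a₁₂ a₂₂ := rfl

/-- for `q` not a root of unity, `A ∈ SL₂(ℤ)`, `c ∈ (ℂ*)²`, the
restriction to `A_q(2)` of the basic `L_q(2)`-module twisted by `τ = τ_c τ_A`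
is simple if and only if `a₂₁ a₂₂ < 0`. -/
theorem twisted_restriction_simple_iff (q : ℂ) (hq : q ≠ 0)
    (hroot : ∀ k : ℕ, q ^ (k + 1) ≠ 1)
    (c₁ c₂ : ℂ) (hc₁ : c₁ ≠ 0) (hc₂ : c₂ ≠ 0)
    (a₁₁ a₁₂ a₂₁ a₂₂ : ℤ) (hdet : a₁₁ * a₂₂ - a₁₂ * a₂₁ = 1) :
    (∀ W : Submodule ℂ (ℤ →₀ ℂ),
        (∀ f ∈ W, XtwistOp q c₁ c₂ a₁₁ a₂₁ f ∈ W) →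
        (∀ f ∈ W, YtwistOp q c₁ c₂ a₁₂ a₂₂ f ∈ W) → W = ⊥ ∨ W = ⊤)
      ↔ a₂₁ * a₂₂ < 0 := by
  simp only [Xtwist_eq_gen, Ytwist_eq_gen]
  constructor
  · intro hsimple
    by_contra hge
    push_neg at hge
    have hcases : (0 ≤ a₂₁ ∧ 0 ≤ a₂₂) ∨ (a₂₁ ≤ 0 ∧ a₂₂ ≤ 0) := by
      rcases le_total 0 a₂₁ with h1 | h1 <;> rcases le_total 0 a₂₂ with h2 | h2
      · exact Or.inl ⟨h1, h2⟩
      · rcases mul_eq_zero.mp (le_antisymm (by nlinarith) hge) with h0 | h0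
        · exact Or.inr ⟨h0.le, h2⟩
        · exact Or.inl ⟨h1, h0.ge⟩
      · rcases mul_eq_zero.mp (le_antisymm (by nlinarith) hge) with h0 | h0
        · exact Or.inl ⟨h0.ge, h2⟩
        · exact Or.inr ⟨h1, h0.le⟩
      · exact Or.inr ⟨h1, h2⟩
    rcases hcases with ⟨h1, h2⟩ | ⟨h1, h2⟩
    · rcases hsimple (Finsupp.supported ℂ ℂ {m : ℤ | 0 ≤ m})
          (supported_invariant q _ a₁₁ a₂₁ _
            (fun k hk => by simp only [Set.mem_setOf_eq] at hk ⊢; omega))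
          (supported_invariant q _ a₁₂ a₂₂ _
            (fun k hk => by simp only [Set.mem_setOf_eq] at hk ⊢; omega)) with hbot | htop
      · have hmem : Finsupp.single (0 : ℤ) (1 : ℂ) ∈
            Finsupp.supported ℂ ℂ {m : ℤ | 0 ≤ m} := by
          rw [Finsupp.mem_supported']
          intro k hk
          simp only [Set.mem_setOf_eq] at hk
          rw [Finsupp.single_apply, if_neg (by omega)]
        rw [hbot, Submodule.mem_bot] at hmem
        exact one_ne_zero (Finsupp.single_eq_zero.mp hmem)
      · have hmem : Finsupp.single (-1 : ℤ) (1 : ℂ) ∈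
            Finsupp.supported ℂ ℂ {m : ℤ | 0 ≤ m} := htop ▸ Submodule.mem_top
        rw [Finsupp.mem_supported'] at hmem
        have := hmem (-1) (by simp only [Set.mem_setOf_eq]; omega)
        rw [Finsupp.single_apply, if_pos rfl] at this
        exact one_ne_zero this
    · rcases hsimple (Finsupp.supported ℂ ℂ {m : ℤ | m ≤ 0})
          (supported_invariant q _ a₁₁ a₂₁ _
            (fun k hk => by simp only [Set.mem_setOf_eq] at hk ⊢; omega))
          (supported_invariant q _ a₁₂ a₂₂ _
            (fun k hk => by simp only [Set.mem_setOf_eq] at hk ⊢; omega)) with hbot | htop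
      · have hmem : Finsupp.single (0 : ℤ) (1 : ℂ) ∈
            Finsupp.supported ℂ ℂ {m : ℤ | m ≤ 0} := by
          rw [Finsupp.mem_supported']
          intro k hk
          simp only [Set.mem_setOf_eq] at hk
          rw [Finsupp.single_apply, if_neg (by omega)]
        rw [hbot, Submodule.mem_bot] at hmem
        exact one_ne_zero (Finsupp.single_eq_zero.mp hmem)
      · have hmem : Finsupp.single (1 : ℤ) (1 : ℂ) ∈
            Finsupp.supported ℂ ℂ {m : ℤ | m ≤ 0} := htop ▸ Submodule.mem_top
        rw [Finsupp.mem_supported'] at hmem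
        have := hmem 1 (by simp only [Set.mem_setOf_eq]; omega)
        rw [Finsupp.single_apply, if_pos rfl] at this
        exact one_ne_zero this
  · intro hlt W hX hY
    by_cases hW : W = ⊥
    · exact Or.inl hW
    · exact Or.inr (simple_of_neg q hq hroot _ _
        (mul_ne_zero (zpow_ne_zero _ hc₁) (zpow_ne_zero _ hc₂))
        (mul_ne_zero (zpow_ne_zero _ hc₁) (zpow_ne_zero _ hc₂))
        a₁₁ a₁₂ a₂₁ a₂₂ hdet hlt W hX hY hW)
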